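/- Let δ⁻ ≤ δ⁺ be real numbers and let α(x) := min(δ⁻x, δ⁺x), β(x) := max(δ⁻x, δ⁺x) for x ∈ ℝ. Then for distinct complex numbers z₁ ≠ z₂ and real p > 1, the leaf is the union of logarithmic double spirals: L(z₁,z₂;p,α,β) = ⋃_{δ ∈ [δ⁻,δ⁺]} S(z₁,z₂;p,δ). -/

import Mathlib

/-- The Möbius transform `M_{z₁,z₂}(ζ) = (z₂ ζ - z₁)/(ζ - 1)`. -/
noncomputable def moebius (z₁ z₂ ζ : ℂ) : ℂ := (z₂ * ζ - z₁) / (ζ - 1)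

/-- The set `Y(p, α, β) = {γ = x + iy : 1/p + α(x) ≤ y ≤ 1/p + β(x)}`. -/
def Yset (p : ℝ) (α β : ℝ → ℝ) : Set ℂ :=
  {γ : ℂ | 1 / p + α γ.re ≤ γ.im ∧ γ.im ≤ 1 / p + β γ.re}

/-- The leaf `𝓛(z₁, z₂; p, α, β) = {M_{z₁,z₂}(e^{2πγ}) : γ ∈ Y(p,α,β)} ∪ {z₁, z₂}`. -/
noncomputable def leaf (z₁ z₂ : ℂ) (p : ℝ) (α β : ℝ → ℝ) : Set ℂ :=
  ((fun γ : ℂ => moebius z₁ z₂ (Complex.exp (2 * Real.pi * γ))) '' Yset p α β) ∪ {z₁, z₂}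

/-- The circular arc `𝒜(z₁, z₂; p)`: the points `z ∉ {z₁, z₂}` such that (some value of)
`arg ((z - z₁)/(z - z₂))` is congruent to `2π/p` modulo `2π`, together with `z₁` and `z₂`. -/
noncomputable def circularArc (z₁ z₂ : ℂ) (p : ℝ) : Set ℂ :=
  {z : ℂ | z ≠ z₁ ∧ z ≠ z₂ ∧
    ∃ k : ℤ, Complex.arg ((z - z₁) / (z - z₂)) = 2 * Real.pi / p + 2 * Real.pi * k} ∪ {z₁, z₂}

/-- The logarithmic double spiral `𝒮(z₁, z₂; p, δ)`: the points `z ∉ {z₁, z₂}` such that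
`arg ((z - z₁)/(z - z₂)) - δ log |(z - z₁)/(z - z₂)|` is congruent to `2π/p` modulo `2π`,
together with `z₁` and `z₂`. -/
noncomputable def logSpiral (z₁ z₂ : ℂ) (p δ : ℝ) : Set ℂ :=
  {z : ℂ | z ≠ z₁ ∧ z ≠ z₂ ∧
    ∃ k : ℤ, Complex.arg ((z - z₁) / (z - z₂)) -
        δ * Real.log ‖(z - z₁) / (z - z₂)‖ =
      2 * Real.pi / p + 2 * Real.pi * k} ∪ {z₁, z₂}

private lemma moebius_props {z₁ z₂ ζ : ℂ} (hz : z₁ ≠ z₂) (hζ0 : ζ ≠ 0) (hζ1 : ζ ≠ 1) :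
    moebius z₁ z₂ ζ ≠ z₁ ∧ moebius z₁ z₂ ζ ≠ z₂ ∧
      (moebius z₁ z₂ ζ - z₁) / (moebius z₁ z₂ ζ - z₂) = ζ := by
  have hd : ζ - 1 ≠ 0 := sub_ne_zero.mpr hζ1
  have hsub : z₂ - z₁ ≠ 0 := sub_ne_zero.mpr hz.symm
  have e1 : moebius z₁ z₂ ζ - z₁ = ζ * (z₂ - z₁) / (ζ - 1) := by
    unfold moebius; field_simp; ring
  have e2 : moebius z₁ z₂ ζ - z₂ = (z₂ - z₁) / (ζ - 1) := by
    unfold moebius; field_simp; ring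
  have h1 : moebius z₁ z₂ ζ - z₁ ≠ 0 := by
    rw [e1]; exact div_ne_zero (mul_ne_zero hζ0 hsub) hd
  have h2 : moebius z₁ z₂ ζ - z₂ ≠ 0 := by
    rw [e2]; exact div_ne_zero hsub hd
  refine ⟨sub_ne_zero.mp h1, sub_ne_zero.mp h2, ?_⟩
  rw [e1, e2]
  field_simp

private lemma moebius_inv {z₁ z₂ z : ℂ} (hz : z₁ ≠ z₂) (h1 : z ≠ z₁) (h2 : z ≠ z₂) :
    moebius z₁ z₂ ((z - z₁) / (z - z₂)) = z := by
  have h2' : z - z₂ ≠ 0 := sub_ne_zero.mpr h2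
  have hsub : z₂ - z₁ ≠ 0 := sub_ne_zero.mpr hz.symm
  have hden : (z - z₁) / (z - z₂) - 1 ≠ 0 := by
    rw [div_sub_one h2']
    have : z - z₁ - (z - z₂) = z₂ - z₁ := by ring
    rw [this]
    exact div_ne_zero hsub h2'
  unfold moebius
  rw [div_eq_iff hden]
  field_simp
  ring

private lemma spiral_main (δminus δplus : ℝ) (hδ : δminus ≤ δplus)
    (z₁ z₂ : ℂ) (hz : z₁ ≠ z₂) (p : ℝ) (hp : 1 < p) (z : ℂ)
    (hz1 : z ≠ z₁) (hz2 : z ≠ z₂) :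
    (∃ γ : ℂ, (1/p + min (δminus * γ.re) (δplus * γ.re) ≤ γ.im ∧
        γ.im ≤ 1/p + max (δminus * γ.re) (δplus * γ.re)) ∧
        moebius z₁ z₂ (Complex.exp (2 * Real.pi * γ)) = z) ↔
      ∃ δ : ℝ, (δminus ≤ δ ∧ δ ≤ δplus) ∧
        ∃ k : ℤ, Complex.arg ((z - z₁) / (z - z₂)) -
            δ * Real.log ‖(z - z₁) / (z - z₂)‖ =
          2 * Real.pi / p + 2 * Real.pi * k := by
  have hπ : (0:ℝ) < Real.pi := Real.pi_pos
  have hp0 : (0:ℝ) < p := lt_trans one_pos hp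
  have hinv1 : 1/p < 1 := by rw [div_lt_one hp0]; exact hp
  have hinv0 : 0 < 1/p := by positivity
  set w : ℂ := (z - z₁) / (z - z₂) with hw
  have hsub1 : z - z₁ ≠ 0 := sub_ne_zero.mpr hz1
  have hsub2 : z - z₂ ≠ 0 := sub_ne_zero.mpr hz2
  have hw0 : w ≠ 0 := div_ne_zero hsub1 hsub2
  constructor
  · rintro ⟨γ, ⟨hγ1, hγ2⟩, hγz⟩
    -- exp (2πγ) ≠ 1
    have hζ1 : Complex.exp (2 * Real.pi * γ) ≠ 1 := by
      intro h
      obtain ⟨n, hn⟩ := Complex.exp_eq_one_iff.mp h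
      have hγeq : γ = (n : ℂ) * Complex.I := by
        have h2π : (2 * (Real.pi : ℂ)) ≠ 0 := by
          simp [Real.pi_ne_zero]
        have : (2 * (Real.pi : ℂ)) * γ = (2 * (Real.pi : ℂ)) * ((n:ℂ) * Complex.I) := by
          rw [hn]; ring
        exact mul_left_cancel₀ h2π this
      have hre : γ.re = 0 := by rw [hγeq]; simp
      have him : γ.im = (n : ℝ) := by rw [hγeq]; simp
      rw [hre] at hγ1 hγ2
      simp only [mul_zero, min_self, max_self, add_zero] at hγ1 hγ2
      have hy : γ.im = 1/p := le_antisymm hγ2 hγ1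
      rw [him] at hy
      have h1 : (0:ℝ) < (n:ℝ) := by rw [hy]; exact hinv0
      have h2 : (n:ℝ) < 1 := by rw [hy]; exact hinv1
      have : (0:ℤ) < n := by exact_mod_cast h1
      have : n < 1 := by exact_mod_cast h2
      omega
    obtain ⟨hm1, hm2, hmρ⟩ := moebius_props hz (Complex.exp_ne_zero _) hζ1
    rw [hγz] at hm1 hm2 hmρ
    have hwζ : w = Complex.exp (2 * Real.pi * γ) := by rw [hw, hmρ]
    have hexp : Complex.exp (2 * Real.pi * γ) = Complex.exp (Complex.log w) := by
      rw [Complex.exp_log hw0, hwζ]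
    obtain ⟨n, hn⟩ := Complex.exp_eq_exp_iff_exists_int.mp hexp
    have hre : 2 * Real.pi * γ.re = Real.log ‖w‖ := by
      have := congrArg Complex.re hn
      simpa [Complex.add_re, Complex.mul_re, Complex.mul_im, Complex.log_re] using this
    have him : 2 * Real.pi * γ.im = Complex.arg w + (n : ℝ) * (2 * Real.pi) := by
      have := congrArg Complex.im hn
      simpa [Complex.add_im, Complex.mul_re, Complex.mul_im, Complex.log_im] using this
    by_cases hx : γ.re = 0
    · refine ⟨δminus, ⟨le_refl _, hδ⟩, -n, ?_⟩
      rw [hx] at hγ1 hγ2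
      simp only [mul_zero, min_self, max_self, add_zero] at hγ1 hγ2
      have hy : γ.im = 1/p := le_antisymm hγ2 hγ1
      have hlog : Real.log ‖w‖ = 0 := by rw [← hre, hx]; ring
      rw [hlog]
      push_cast
      rw [hy] at him
      have : 2 * Real.pi * (1/p) = 2 * Real.pi / p := by ring
      rw [this] at him
      linarith
    · refine ⟨(γ.im - 1/p)/γ.re, ?_, -n, ?_⟩
      · rcases lt_or_gt_of_ne hx with hneg | hpos
        · have hmin : min (δminus * γ.re) (δplus * γ.re) = δplus * γ.re :=
            min_eq_right (mul_le_mul_of_nonpos_right hδ hneg.le)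
          have hmax : max (δminus * γ.re) (δplus * γ.re) = δminus * γ.re :=
            max_eq_left (mul_le_mul_of_nonpos_right hδ hneg.le)
          rw [hmin] at hγ1; rw [hmax] at hγ2
          constructor
          · rw [le_div_iff_of_neg hneg]; linarith
          · rw [div_le_iff_of_neg hneg]; linarith
        · have hmin : min (δminus * γ.re) (δplus * γ.re) = δminus * γ.re :=
            min_eq_left (mul_le_mul_of_nonneg_right hδ hpos.le)
          have hmax : max (δminus * γ.re) (δplus * γ.re) = δplus * γ.re :=
            max_eq_right (mul_le_mul_of_nonneg_right hδ hpos.le)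
          rw [hmin] at hγ1; rw [hmax] at hγ2
          constructor
          · rw [le_div_iff₀ hpos]; linarith
          · rw [div_le_iff₀ hpos]; linarith
      · have hδx : (γ.im - 1/p)/γ.re * γ.re = γ.im - 1/p := div_mul_cancel₀ _ hx
        have hkey : (γ.im - 1/p)/γ.re * Real.log ‖w‖
            = 2 * Real.pi * (γ.im - 1/p) := by
          rw [← hre]
          calc (γ.im - 1/p)/γ.re * (2 * Real.pi * γ.re)
              = 2 * Real.pi * ((γ.im - 1/p)/γ.re * γ.re) := by ring
            _ = 2 * Real.pi * (γ.im - 1/p) := by rw [hδx]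
        rw [hkey]
        push_cast
        have h2 : 2 * Real.pi * (1/p) = 2 * Real.pi / p := by ring
        linarith [him, h2.symm ▸ (rfl : 2 * Real.pi / p = 2 * Real.pi / p)]
  · rintro ⟨δ, ⟨hδ1, hδ2⟩, k, hk⟩
    set x : ℝ := Real.log ‖w‖ / (2 * Real.pi) with hxdef
    set y : ℝ := 1/p + δ * x with hydef
    refine ⟨(x : ℂ) + (y : ℂ) * Complex.I, ?_, ?_⟩
    · have hγre : ((x : ℂ) + (y : ℂ) * Complex.I).re = x := by simp
      have hγim : ((x : ℂ) + (y : ℂ) * Complex.I).im = y := by simp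
      rw [hγre, hγim, hydef]
      constructor
      · have : min (δminus * x) (δplus * x) ≤ δ * x := by
          rcases le_total 0 x with h | h
          · exact le_trans (min_le_left _ _) (mul_le_mul_of_nonneg_right hδ1 h)
          · exact le_trans (min_le_right _ _) (mul_le_mul_of_nonpos_right hδ2 h)
        linarith
      · have : δ * x ≤ max (δminus * x) (δplus * x) := by
          rcases le_total 0 x with h | h
          · exact le_trans (mul_le_mul_of_nonneg_right hδ2 h) (le_max_right _ _)
          · exact le_trans (mul_le_mul_of_nonpos_right hδ1 h) (le_max_left _ _)
        linarith
    · have h2πx : 2 * Real.pi * x = Real.log ‖w‖ := by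
        rw [hxdef]; field_simp
      have heq : 2 * (Real.pi : ℂ) * ((x : ℂ) + (y : ℂ) * Complex.I)
          = Complex.log w + ((-k : ℤ) : ℂ) * (2 * Real.pi * Complex.I) := by
        apply Complex.ext
        · simp only [Complex.add_re, Complex.mul_re, Complex.mul_im, Complex.log_re,
            Complex.ofReal_re, Complex.ofReal_im, Complex.I_re, Complex.I_im,
            Complex.intCast_re, Complex.intCast_im]
          push_cast
          simp
          linarith [h2πx]
        · simp only [Complex.add_im, Complex.mul_re, Complex.mul_im, Complex.log_im,
            Complex.ofReal_re, Complex.ofReal_im, Complex.I_re, Complex.I_im,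
            Complex.intCast_re, Complex.intCast_im]
          push_cast
          simp
          have : 2 * Real.pi * y = Complex.arg w + (-(k:ℝ)) * (2 * Real.pi) := by
            rw [hydef]
            have hδlog : δ * (2 * Real.pi * x) = δ * Real.log ‖w‖ := by
              rw [h2πx]
            have h2p : 2 * Real.pi * (1/p) = 2 * Real.pi / p := by ring
            nlinarith [hk]
          linarith [this]
      have hexpw : Complex.exp (2 * Real.pi * ((x : ℂ) + (y : ℂ) * Complex.I)) = w := by
        rw [heq, Complex.exp_add, Complex.exp_log hw0,
          Complex.exp_int_mul_two_pi_mul_I]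
        ring
      rw [hexpw, hw]
      exact moebius_inv hz hz1 hz2

/-- For `α(x) = min (δ⁻ x, δ⁺ x)` and `β(x) = max (δ⁻ x, δ⁺ x)`, the leaf is the union of
the logarithmic double spirals `𝒮(z₁, z₂; p, δ)` over `δ ∈ [δ⁻, δ⁺]`. -/
theorem leaf_eq_iUnion_logSpiral (δminus δplus : ℝ) (hδ : δminus ≤ δplus)
    (z₁ z₂ : ℂ) (hz : z₁ ≠ z₂) (p : ℝ) (hp : 1 < p) :
    leaf z₁ z₂ p (fun x => min (δminus * x) (δplus * x))
        (fun x => max (δminus * x) (δplus * x)) =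
      ⋃ δ ∈ Set.Icc δminus δplus, logSpiral z₁ z₂ p δ := by
  ext z
  simp only [leaf, logSpiral, Yset, Set.mem_union, Set.mem_image, Set.mem_setOf_eq,
    Set.mem_iUnion, Set.mem_insert_iff, Set.mem_singleton_iff, Set.mem_Icc, exists_prop]
  by_cases htriv : z = z₁ ∨ z = z₂
  · constructor
    · intro _; exact ⟨δminus, ⟨le_refl _, hδ⟩, Or.inr htriv⟩
    · intro _; exact Or.inr htriv
  · push_neg at htriv
    obtain ⟨hz1, hz2⟩ := htriv
    constructor
    · rintro (h | h)
      · obtain ⟨δ, hδmem, k, hk⟩ :=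
          (spiral_main δminus δplus hδ z₁ z₂ hz p hp z hz1 hz2).mp h
        exact ⟨δ, hδmem, Or.inl ⟨hz1, hz2, k, hk⟩⟩
      · exact absurd h (by tauto)
    · rintro ⟨δ, hδmem, (⟨_, _, k, hk⟩ | h)⟩
      · exact Or.inl
          ((spiral_main δminus δplus hδ z₁ z₂ hz p hp z hz1 hz2).mpr ⟨δ, hδmem, k, hk⟩)
      · exact absurd h (by tauto)
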